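/- Assume: (i) the SBP property Q + Qᵀ = V_fᵀ B V_f, (ii) Q 1 = 0 and t_Lᵀ1 = t_Rᵀ1 = 1, and (iii) the entropy setup with f_S symmetric, consistent, and entropy conservative, and v a bijection with inverse u(·). Let Q_h = S_h + (1/2)B_h, where, with blocks ordered as (element-1 volume nodes, element-1 face nodes, element-2 volume nodes, element-2 face nodes), S_h = [[S, (1/2)V_fᵀB, 0, 0],[-(1/2)BV_f, 0, 0, (1/2)e_R e_Lᵀ],[0, 0, S, (1/2)V_fᵀB],[0, -(1/2)e_L e_Rᵀ, -(1/2)BV_f, 0]] and B_h = blockdiag(0_{N+1}, -e_L e_Lᵀ, 0_{N+1}, e_R e_Rᵀ), and let I_h = blockdiag([I_{N+1}; V_f],[I_{N+1}; V_f]) and W_h = blockdiag(W, W). Suppose u_h(t) = (u¹(t), u²(t)) ∈ ((ℝ^m)^{N+1})² is differentiable in t and satisfies, componentwise, W_h (d u_h/dt) + 2 I_hᵀ (Q_h ∘ F_S) 1 = 0, where ṽ ∈ (ℝ^m)^{2(N+3)} is obtained by applying I_h to each of the m components of (v(u¹_1),…,v(u¹_{N+1}), v(u²_1),…,v(u²_{N+1}))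 (so ṽ consists of the nodal entropy variables together with their interpolated face values), ũ_i := u(ṽ_i) are the entropy-projected conservative variables, and ((Q_h ∘ F_S) 1)_i := Σ_j (Q_h)_{ij} f_S(ũ_i, ũ_j). Then u_h satisfies the semi-discrete conservation of entropy: d/dt [ Σ_{k=1,2} Σ_{i=1}^{N+1} w_i S(u^k_i(t)) ] + ( v_R·f(ũ_R) - ψ(ũ_R) ) - ( v_L·f(ũ_L) - ψ(ũ_L) ) = 0 for all t, where v_L = Σ_j (t_L)_j v(u¹_j), v_R = Σ_j (t_R)_j v(u²_j), ũ_L = u(v_L), and ũ_R = u(v_R). -/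

import Mathlib

open Matrix BigOperators

private lemma two_el_sum_swap_mul {β γ : Type*} [Fintype β] [Fintype γ]
    (v : γ → ℝ) (q : β → ℝ) (g : β → γ → ℝ) :
    ∑ c, v c * ∑ b, q b * g b c = ∑ b, q b * ∑ c, v c * g b c := by
  calc ∑ c, v c * ∑ b, q b * g b c
      = ∑ c, ∑ b, q b * (v c * g b c) := by
        refine Finset.sum_congr rfl fun c _ => ?_
        rw [Finset.mul_sum]
        exact Finset.sum_congr rfl fun b _ => by ring
    _ = ∑ b, ∑ c, q b * (v c * g b c) := Finset.sum_comm
    _ = ∑ b, q b * ∑ c, v c * g b c := by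
        exact Finset.sum_congr rfl fun b _ => (Finset.mul_sum _ _ _).symm

private lemma two_el_sum_collect {α β γ : Type*} [Fintype α] [Fintype β] [Fintype γ]
    (vv : β → γ → ℝ) (I : α → β → ℝ) (F : α → γ → ℝ) :
    ∑ k, ∑ c, vv k c * (2 * ∑ a, I a k * F a c)
      = 2 * ∑ a, ∑ c, (∑ k, I a k * vv k c) * F a c := by
  calc ∑ k, ∑ c, vv k c * (2 * ∑ a, I a k * F a c)
      = ∑ k, ∑ a, ∑ c, I a k * vv k c * F a c * 2 := by
        refine Finset.sum_congr rfl fun k _ => ?_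
        calc ∑ c, vv k c * (2 * ∑ a, I a k * F a c)
            = ∑ c, ∑ a, I a k * vv k c * F a c * 2 := by
              refine Finset.sum_congr rfl fun c _ => ?_
              rw [Finset.mul_sum, Finset.mul_sum]
              exact Finset.sum_congr rfl fun a _ => by ring
          _ = ∑ a, ∑ c, I a k * vv k c * F a c * 2 := Finset.sum_comm
    _ = ∑ a, ∑ k, ∑ c, I a k * vv k c * F a c * 2 := Finset.sum_comm
    _ = 2 * ∑ a, ∑ c, (∑ k, I a k * vv k c) * F a c := by
        rw [Finset.mul_sum]
        refine Finset.sum_congr rfl fun a _ => ?_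
        rw [Finset.sum_comm, Finset.mul_sum]
        refine Finset.sum_congr rfl fun c _ => ?_
        rw [Finset.sum_mul, Finset.mul_sum]
        exact Finset.sum_congr rfl fun k _ => by ring

/-- Skew/boundary splitting of the quadratic form. -/
private lemma two_el_qh_split {ι : Type*} [Fintype ι] (Q B : Matrix ι ι ℝ)
    (T : ι → ι → ℝ) (g : ι → ℝ)
    (hrow : ∀ a, ∑ b, Q a b = 0)
    (hQQ : ∀ a b, Q a b + Q b a = B a b)
    (hTsub : ∀ a b, T a b - T b a = g a - g b) :
    2 * (∑ a, ∑ b, Q a b * T a b) = ∑ a, ∑ b, B a b * (T a b - g b) := by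
  have h2 : (∑ a, ∑ b, Q a b * T b a) = ∑ a, ∑ b, Q b a * T a b := Finset.sum_comm
  have h3 : (∑ a, ∑ b, Q a b * T a b) - (∑ a, ∑ b, Q a b * T b a)
      = ∑ a, ∑ b, Q a b * (g a - g b) := by
    rw [← Finset.sum_sub_distrib]
    refine Finset.sum_congr rfl fun a _ => ?_
    rw [← Finset.sum_sub_distrib]
    refine Finset.sum_congr rfl fun b _ => ?_
    rw [← mul_sub, hTsub]
  have h4a : (∑ a, ∑ b, Q a b * g a) = 0 := by
    refine Finset.sum_eq_zero fun a _ => ?_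
    rw [← Finset.sum_mul, hrow, zero_mul]
  have h4c : (∑ a, ∑ b, Q b a * g b) = 0 := by
    rw [Finset.sum_comm]
    refine Finset.sum_eq_zero fun a _ => ?_
    rw [← Finset.sum_mul, hrow, zero_mul]
  have h4b : (∑ a, ∑ b, Q a b * g b) = ∑ a, ∑ b, B a b * g b := by
    have : ∀ a b, Q a b * g b = B a b * g b - Q b a * g b := by
      intro a b; linear_combination (hQQ a b) * g b
    calc (∑ a, ∑ b, Q a b * g b)
        = ∑ a, ∑ b, (B a b * g b - Q b a * g b) := by
          exact Finset.sum_congr rfl fun a _ => Finset.sum_congr rfl fun b _ => this a b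
      _ = (∑ a, ∑ b, B a b * g b) - ∑ a, ∑ b, Q b a * g b := by
          rw [← Finset.sum_sub_distrib]
          exact Finset.sum_congr rfl fun a _ => Finset.sum_sub_distrib _ _
      _ = ∑ a, ∑ b, B a b * g b := by rw [h4c, sub_zero]
  have h5 : (∑ a, ∑ b, Q a b * T a b) + (∑ a, ∑ b, Q a b * T b a)
      = ∑ a, ∑ b, B a b * T a b := by
    rw [h2, ← Finset.sum_add_distrib]
    refine Finset.sum_congr rfl fun a _ => ?_
    rw [← Finset.sum_add_distrib]
    refine Finset.sum_congr rfl fun b _ => ?_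
    rw [← add_mul, hQQ]
  have h6 : (∑ a, ∑ b, Q a b * (g a - g b))
      = (∑ a, ∑ b, Q a b * g a) - ∑ a, ∑ b, Q a b * g b := by
    rw [← Finset.sum_sub_distrib]
    refine Finset.sum_congr rfl fun a _ => ?_
    rw [← Finset.sum_sub_distrib]
    exact Finset.sum_congr rfl fun b _ => mul_sub _ _ _
  have h7 : (∑ a, ∑ b, B a b * (T a b - g b))
      = (∑ a, ∑ b, B a b * T a b) - ∑ a, ∑ b, B a b * g b := by
    rw [← Finset.sum_sub_distrib]
    refine Finset.sum_congr rfl fun a _ => ?_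
    rw [← Finset.sum_sub_distrib]
    exact Finset.sum_congr rfl fun b _ => mul_sub _ _ _
  linarith [h3, h5, h6, h7, h4a, h4b]

/-- **Semi-discrete entropy conservation for the two-element decoupled (Gauss collocation)
scheme.** If `u_h = (u¹, u²)` solves `W_h du_h/dt + 2 I_hᵀ (Q_h ∘ F_S) 1 = 0`, where `F_S` is
built from a symmetric, consistent, entropy conservative two-point flux evaluated at the
entropy-projected conservative variables `ũ`, then the total entropy satisfies
`d/dt Σ w S(u) + (v_R·f(ũ_R) - ψ(ũ_R)) - (v_L·f(ũ_L) - ψ(ũ_L)) = 0`. -/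
theorem two_element_decoupled_entropy_conservation
    (N m : ℕ) (hm : 1 ≤ m)
    (w : Fin (N + 1) → ℝ)
    (Q : Matrix (Fin (N + 1)) (Fin (N + 1)) ℝ)
    (Vf : Matrix (Fin 2) (Fin (N + 1)) ℝ)
    (B : Matrix (Fin 2) (Fin 2) ℝ)
    (hB : B = Matrix.diagonal ![(-1 : ℝ), 1])
    -- (i) the SBP property
    (hSBP : Q + Qᵀ = Vfᵀ * B * Vf)
    -- (ii) row sums
    (hQ1 : Q *ᵥ (fun _ => (1 : ℝ)) = 0)
    (htL1 : ∑ j, Vf 0 j = 1) (htR1 : ∑ j, Vf 1 j = 1)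
    (eL eR : Fin 2 → ℝ) (heL : eL = ![1, 0]) (heR : eR = ![0, 1])
    (S : Matrix (Fin (N + 1)) (Fin (N + 1)) ℝ)
    (hS : S = Q - (1 / 2 : ℝ) • (Vfᵀ * B * Vf))
    -- two-element decoupled matrices
    (Sh Bh Qh : Matrix ((Fin (N + 1) ⊕ Fin 2) ⊕ (Fin (N + 1) ⊕ Fin 2))
                       ((Fin (N + 1) ⊕ Fin 2) ⊕ (Fin (N + 1) ⊕ Fin 2)) ℝ)
    (hSh : Sh = Matrix.fromBlocks
      (Matrix.fromBlocks S ((1 / 2 : ℝ) • (Vfᵀ * B)) (-((1 / 2 : ℝ) • (B * Vf))) 0)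
      (Matrix.fromBlocks 0 0 0 ((1 / 2 : ℝ) • Matrix.vecMulVec eR eL))
      (Matrix.fromBlocks 0 0 0 (-((1 / 2 : ℝ) • Matrix.vecMulVec eL eR)))
      (Matrix.fromBlocks S ((1 / 2 : ℝ) • (Vfᵀ * B)) (-((1 / 2 : ℝ) • (B * Vf))) 0))
    (hBh : Bh = Matrix.fromBlocks
      (Matrix.fromBlocks 0 0 0 (-(Matrix.vecMulVec eL eL))) 0
      0 (Matrix.fromBlocks 0 0 0 (Matrix.vecMulVec eR eR)))
    (hQh : Qh = Sh + (1 / 2 : ℝ) • Bh)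
    (Ih : Matrix ((Fin (N + 1) ⊕ Fin 2) ⊕ (Fin (N + 1) ⊕ Fin 2))
                 (Fin (N + 1) ⊕ Fin (N + 1)) ℝ)
    (hIh : Ih = Matrix.fromBlocks
      (Matrix.fromRows (1 : Matrix (Fin (N + 1)) (Fin (N + 1)) ℝ) Vf) 0
      0 (Matrix.fromRows (1 : Matrix (Fin (N + 1)) (Fin (N + 1)) ℝ) Vf))
    -- (iii) the entropy setup
    (Sfun : (Fin m → ℝ) → ℝ) (v uu f : (Fin m → ℝ) → Fin m → ℝ)
    (ψ : (Fin m → ℝ) → ℝ) (fS : (Fin m → ℝ) → (Fin m → ℝ) → Fin m → ℝ)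
    (hgrad : ∀ y : Fin m → ℝ,
      HasFDerivAt Sfun (∑ c, v y c • (ContinuousLinearMap.proj c : (Fin m → ℝ) →L[ℝ] ℝ)) y)
    (huv : Function.LeftInverse uu v) (hvu : Function.RightInverse uu v)
    (hsym : ∀ a b, fS a b = fS b a)
    (hcons : ∀ a, fS a a = f a)
    (hec : ∀ a b, (v a - v b) ⬝ᵥ fS a b = ψ a - ψ b)
    -- the semi-discrete solution and formulation
    (u1 u2 : ℝ → Fin (N + 1) → Fin m → ℝ)
    (hd1 : ∀ i c, Differentiable ℝ (fun t => u1 t i c))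
    (hd2 : ∀ i c, Differentiable ℝ (fun t => u2 t i c))
    (vtil util : ℝ → ((Fin (N + 1) ⊕ Fin 2) ⊕ (Fin (N + 1) ⊕ Fin 2)) → Fin m → ℝ)
    (hvtil : ∀ t k c, vtil t k c
      = ∑ j, Ih k j * Sum.elim (fun i => v (u1 t i)) (fun i => v (u2 t i)) j c)
    (hutil : ∀ t k, util t k = uu (vtil t k))
    (hform : ∀ (t : ℝ) (k : Fin (N + 1) ⊕ Fin (N + 1)) (c : Fin m),
      Sum.elim w w k
          * deriv (fun s => Sum.elim (fun i => u1 s i c) (fun i => u2 s i c) k) t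
        + 2 * ∑ a, Ih a k * ∑ b, Qh a b * fS (util t a) (util t b) c = 0) :
    ∀ t : ℝ,
      deriv (fun s => (∑ i, w i * Sfun (u1 s i)) + ∑ i, w i * Sfun (u2 s i)) t
        + (((fun c => ∑ j, Vf 1 j * v (u2 t j) c)
              ⬝ᵥ f (uu fun c => ∑ j, Vf 1 j * v (u2 t j) c))
            - ψ (uu fun c => ∑ j, Vf 1 j * v (u2 t j) c))
        - (((fun c => ∑ j, Vf 0 j * v (u1 t j) c)
              ⬝ᵥ f (uu fun c => ∑ j, Vf 0 j * v (u1 t j) c))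
            - ψ (uu fun c => ∑ j, Vf 0 j * v (u1 t j) c)) = 0 := by
  -- scalar entry computations
  have hM : ∀ i j, (Vfᵀ * B * Vf) i j = -(Vf 0 i * Vf 0 j) + Vf 1 i * Vf 1 j := by
    intro i j
    simp [Matrix.mul_apply, Fin.sum_univ_two, hB, Matrix.diagonal]
    try ring
  have hVB0 : ∀ i, (Vfᵀ * B) i 0 = -(Vf 0 i) := by
    intro i; simp [Matrix.mul_apply, Fin.sum_univ_two, hB, Matrix.diagonal]
  have hVB1 : ∀ i, (Vfᵀ * B) i 1 = Vf 1 i := by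
    intro i; simp [Matrix.mul_apply, Fin.sum_univ_two, hB, Matrix.diagonal]
  have hBV0 : ∀ j, (B * Vf) 0 j = -(Vf 0 j) := by
    intro j; simp [Matrix.mul_apply, Fin.sum_univ_two, hB, Matrix.diagonal]
  have hBV1 : ∀ j, (B * Vf) 1 j = Vf 1 j := by
    intro j; simp [Matrix.mul_apply, Fin.sum_univ_two, hB, Matrix.diagonal]
  have hQsym : ∀ i j, Q i j + Q j i = -(Vf 0 i * Vf 0 j) + Vf 1 i * Vf 1 j := by
    intro i j
    have h := congrFun (congrFun hSBP i) j
    simpa [Matrix.add_apply, Matrix.transpose_apply, hM i j] using h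
  have hSa : ∀ i j, S i j
      = Q i j - (1 / 2) * (-(Vf 0 i * Vf 0 j) + Vf 1 i * Vf 1 j) := by
    intro i j
    rw [hS]
    simp [Matrix.sub_apply, Matrix.smul_apply, hM i j]
  have hQrow : ∀ i, ∑ j, Q i j = 0 := by
    intro i
    have h := congrFun hQ1 i
    simpa [Matrix.mulVec, dotProduct] using h
  have hSrow : ∀ i, ∑ j, S i j = (1 / 2) * Vf 0 i - (1 / 2) * Vf 1 i := by
    intro i
    have e : ∑ j, S i j = (∑ j, Q i j) + ((1 / 2) * Vf 0 i) * (∑ j, Vf 0 j)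
        + (-(1 / 2) * Vf 1 i) * (∑ j, Vf 1 j) := by
      rw [Finset.mul_sum, Finset.mul_sum, ← Finset.sum_add_distrib, ← Finset.sum_add_distrib]
      refine Finset.sum_congr rfl fun j _ => ?_
      rw [hSa i j]; ring
    rw [e, hQrow, htL1, htR1]; ring
  have hBVrow0 : ∑ j, (B * Vf) 0 j = -1 := by
    rw [show (∑ j, (B * Vf) 0 j) = ∑ j, -(Vf 0 j) from
      Finset.sum_congr rfl fun j _ => hBV0 j]
    rw [Finset.sum_neg_distrib, htL1]
  have hBVrow1 : ∑ j, (B * Vf) 1 j = 1 := by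
    rw [show (∑ j, (B * Vf) 1 j) = ∑ j, Vf 1 j from
      Finset.sum_congr rfl fun j _ => hBV1 j]
    exact htR1
  -- Qh a b + Qh b a = Bh a b
  have hQQ : ∀ a b, Qh a b + Qh b a = Bh a b := by
    intro a b
    rcases a with (i | g) | (i | g) <;> rcases b with (j | h) | (j | h) <;>
      simp only [hQh, hSh, hBh, Matrix.add_apply, Matrix.smul_apply, smul_eq_mul,
        Matrix.fromBlocks_apply₁₁, Matrix.fromBlocks_apply₁₂, Matrix.fromBlocks_apply₂₁,
        Matrix.fromBlocks_apply₂₂, Matrix.neg_apply, Matrix.zero_apply,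
        Matrix.vecMulVec_apply, mul_zero, add_zero, zero_add, neg_zero]
    all_goals first
      | (rw [hSa i j, hSa j i]; linear_combination hQsym i j)
      | (fin_cases g <;> fin_cases h <;> norm_num [heL, heR])
      | (fin_cases h <;> simp [hVB0, hVB1, hBV0, hBV1] <;> ring)
      | (fin_cases g <;> simp [hVB0, hVB1, hBV0, hBV1] <;> ring)
  -- row sums of Qh vanish
  have hVBpair : ∀ i, (1 / 2 : ℝ) * (Vfᵀ * B) i 0 + (1 / 2) * (Vfᵀ * B) i 1
      = -(1 / 2) * Vf 0 i + (1 / 2) * Vf 1 i := by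
    intro i; rw [hVB0 i, hVB1 i]; ring
  have hrowQh : ∀ a, ∑ b, Qh a b = 0 := by
    intro a
    rcases a with (i | g) | (i | g) <;>
      simp only [hQh, hSh, hBh, Matrix.add_apply, Matrix.smul_apply, smul_eq_mul,
        Matrix.fromBlocks_apply₁₁, Matrix.fromBlocks_apply₁₂, Matrix.fromBlocks_apply₂₁,
        Matrix.fromBlocks_apply₂₂, Matrix.neg_apply, Matrix.zero_apply,
        Matrix.vecMulVec_apply, mul_zero, add_zero, zero_add, neg_zero,
        Fintype.sum_sum_type, Fin.sum_univ_two, Finset.sum_const_zero]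
    all_goals first
      | (rw [hSrow i, hVB0 i, hVB1 i]; ring)
      | (rw [show (∑ x, -((1 / 2 : ℝ) * (B * Vf) g x)) = -(1 / 2) * ∑ x, (B * Vf) g x from by
            rw [Finset.mul_sum]
            exact Finset.sum_congr rfl fun x _ => by ring]
         fin_cases g <;> norm_num [hBVrow0, hBVrow1, heL, heR])
  -- the boundary sum
  have hBsum : ∀ φ : ((Fin (N + 1) ⊕ Fin 2) ⊕ (Fin (N + 1) ⊕ Fin 2)) →
      ((Fin (N + 1) ⊕ Fin 2) ⊕ (Fin (N + 1) ⊕ Fin 2)) → ℝ,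
      (∑ a, ∑ b, Bh a b * φ a b)
        = -(φ (Sum.inl (Sum.inr 0)) (Sum.inl (Sum.inr 0)))
          + φ (Sum.inr (Sum.inr 1)) (Sum.inr (Sum.inr 1)) := by
    intro φ
    simp [hBh, Fintype.sum_sum_type, Fin.sum_univ_two, Matrix.vecMulVec_apply,
      heL, heR]
  intro t
  -- the time derivative of the total entropy
  have hS1 : ∀ i, HasDerivAt (fun s => Sfun (u1 s i))
      (∑ c, v (u1 t i) c * deriv (fun s => u1 s i c) t) t := by
    intro i
    have hc : HasDerivAt (fun s => u1 s i) (fun c => deriv (fun s => u1 s i c) t) t :=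
      hasDerivAt_pi.2 fun c => ((hd1 i c) t).hasDerivAt
    have h := (hgrad (u1 t i)).comp_hasDerivAt t hc
    simp only [ContinuousLinearMap.sum_apply, ContinuousLinearMap.smul_apply,
      ContinuousLinearMap.proj_apply, smul_eq_mul] at h
    exact h
  have hS2 : ∀ i, HasDerivAt (fun s => Sfun (u2 s i))
      (∑ c, v (u2 t i) c * deriv (fun s => u2 s i c) t) t := by
    intro i
    have hc : HasDerivAt (fun s => u2 s i) (fun c => deriv (fun s => u2 s i c) t) t :=
      hasDerivAt_pi.2 fun c => ((hd2 i c) t).hasDerivAt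
    have h := (hgrad (u2 t i)).comp_hasDerivAt t hc
    simp only [ContinuousLinearMap.sum_apply, ContinuousLinearMap.smul_apply,
      ContinuousLinearMap.proj_apply, smul_eq_mul] at h
    exact h
  have hD : HasDerivAt (fun s => (∑ i, w i * Sfun (u1 s i)) + ∑ i, w i * Sfun (u2 s i))
      ((∑ i, w i * ∑ c, v (u1 t i) c * deriv (fun s => u1 s i c) t)
        + ∑ i, w i * ∑ c, v (u2 t i) c * deriv (fun s => u2 s i c) t) t := by
    exact (HasDerivAt.fun_sum fun i _ => (hS1 i).const_mul (w i)).add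
      (HasDerivAt.fun_sum fun i _ => (hS2 i).const_mul (w i))
  rw [hD.deriv]
  -- rewrite the derivative using the semi-discrete formulation
  have hw : ∀ (k : Fin (N + 1) ⊕ Fin (N + 1)) (c : Fin m),
      Sum.elim w w k
          * deriv (fun s => Sum.elim (fun i => u1 s i c) (fun i => u2 s i c) k) t
        = -(2 * ∑ a, Ih a k * ∑ b, Qh a b * fS (util t a) (util t b) c) := by
    intro k c; linarith [hform t k c]
  have hDsum :
      (∑ i, w i * ∑ c, v (u1 t i) c * deriv (fun s => u1 s i c) t)
        + (∑ i, w i * ∑ c, v (u2 t i) c * deriv (fun s => u2 s i c) t)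
      = -(2 * ∑ a, ∑ b, Qh a b * ∑ c, vtil t a c * fS (util t a) (util t b) c) := by
    have e1 : (∑ i, w i * ∑ c, v (u1 t i) c * deriv (fun s => u1 s i c) t)
          + (∑ i, w i * ∑ c, v (u2 t i) c * deriv (fun s => u2 s i c) t)
        = ∑ k : Fin (N + 1) ⊕ Fin (N + 1), ∑ c,
            Sum.elim (fun i => v (u1 t i)) (fun i => v (u2 t i)) k c
              * (Sum.elim w w k
                * deriv (fun s => Sum.elim (fun i => u1 s i c) (fun i => u2 s i c) k) t) := by
      rw [Fintype.sum_sum_type]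
      congr 1
      · refine Finset.sum_congr rfl fun i _ => ?_
        rw [Finset.mul_sum]
        exact Finset.sum_congr rfl fun c _ => by simp only [Sum.elim_inl]; ring
      · refine Finset.sum_congr rfl fun i _ => ?_
        rw [Finset.mul_sum]
        exact Finset.sum_congr rfl fun c _ => by simp only [Sum.elim_inr]; ring
    rw [e1]
    have e2 : ∀ (k : Fin (N + 1) ⊕ Fin (N + 1)) (c : Fin m),
        Sum.elim (fun i => v (u1 t i)) (fun i => v (u2 t i)) k c
            * (Sum.elim w w k
              * deriv (fun s => Sum.elim (fun i => u1 s i c) (fun i => u2 s i c) k) t)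
          = -(Sum.elim (fun i => v (u1 t i)) (fun i => v (u2 t i)) k c
              * (2 * ∑ a, Ih a k * ∑ b, Qh a b * fS (util t a) (util t b) c)) := by
      intro k c; rw [hw k c]; ring
    rw [show (∑ k : Fin (N + 1) ⊕ Fin (N + 1), ∑ c,
        Sum.elim (fun i => v (u1 t i)) (fun i => v (u2 t i)) k c
          * (Sum.elim w w k
            * deriv (fun s => Sum.elim (fun i => u1 s i c) (fun i => u2 s i c) k) t))
      = -(∑ k : Fin (N + 1) ⊕ Fin (N + 1), ∑ c,
          Sum.elim (fun i => v (u1 t i)) (fun i => v (u2 t i)) k c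
            * (2 * ∑ a, Ih a k * ∑ b, Qh a b * fS (util t a) (util t b) c)) from by
      rw [← Finset.sum_neg_distrib]
      refine Finset.sum_congr rfl fun k _ => ?_
      rw [← Finset.sum_neg_distrib]
      exact Finset.sum_congr rfl fun c _ => e2 k c]
    congr 1
    rw [two_el_sum_collect (fun k c => Sum.elim (fun i => v (u1 t i)) (fun i => v (u2 t i)) k c)
      (fun a k => Ih a k) (fun a c => ∑ b, Qh a b * fS (util t a) (util t b) c)]
    congr 1
    refine Finset.sum_congr rfl fun a _ => ?_
    rw [← two_el_sum_swap_mul (fun c => vtil t a c) (fun b => Qh a b)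
      (fun b c => fS (util t a) (util t b) c)]
    exact Finset.sum_congr rfl fun c _ => by rw [← hvtil t a c]
  rw [hDsum]
  -- the quadratic form identity
  have hvU : ∀ a, v (util t a) = vtil t a := by
    intro a; rw [hutil]; exact hvu _
  have hTsub : ∀ a b,
      (∑ c, vtil t a c * fS (util t a) (util t b) c)
        - (∑ c, vtil t b c * fS (util t b) (util t a) c)
      = ψ (util t a) - ψ (util t b) := by
    intro a b
    have h := hec (util t a) (util t b)
    rw [← h]
    rw [show (∑ c, vtil t b c * fS (util t b) (util t a) c)
        = ∑ c, vtil t b c * fS (util t a) (util t b) c from by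
      rw [hsym (util t b) (util t a)]]
    rw [← Finset.sum_sub_distrib]
    simp only [dotProduct, Pi.sub_apply]
    refine Finset.sum_congr rfl fun c _ => ?_
    rw [hvU a, hvU b]; ring
  have hkey := two_el_qh_split Qh Bh
    (fun a b => ∑ c, vtil t a c * fS (util t a) (util t b) c)
    (fun a => ψ (util t a)) hrowQh hQQ hTsub
  rw [hkey, hBsum (fun a b => (∑ c, vtil t a c * fS (util t a) (util t b) c)
    - ψ (util t b))]
  -- identify the boundary terms
  have hvL : vtil t (Sum.inl (Sum.inr 0)) = fun c => ∑ j, Vf 0 j * v (u1 t j) c := by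
    funext c
    rw [hvtil]
    simp [hIh, Fintype.sum_sum_type]
  have hvR : vtil t (Sum.inr (Sum.inr 1)) = fun c => ∑ j, Vf 1 j * v (u2 t j) c := by
    funext c
    rw [hvtil]
    simp [hIh, Fintype.sum_sum_type]
  have hUL : util t (Sum.inl (Sum.inr 0)) = uu fun c => ∑ j, Vf 0 j * v (u1 t j) c := by
    rw [hutil, hvL]
  have hUR : util t (Sum.inr (Sum.inr 1)) = uu fun c => ∑ j, Vf 1 j * v (u2 t j) c := by
    rw [hutil, hvR]
  have hTLL : (∑ c, vtil t (Sum.inl (Sum.inr 0)) c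
        * fS (util t (Sum.inl (Sum.inr 0))) (util t (Sum.inl (Sum.inr 0))) c)
      = (fun c => ∑ j, Vf 0 j * v (u1 t j) c)
          ⬝ᵥ f (uu fun c => ∑ j, Vf 0 j * v (u1 t j) c) := by
    rw [hUL, hcons, hvL]
    rfl
  have hTRR : (∑ c, vtil t (Sum.inr (Sum.inr 1)) c
        * fS (util t (Sum.inr (Sum.inr 1))) (util t (Sum.inr (Sum.inr 1))) c)
      = (fun c => ∑ j, Vf 1 j * v (u2 t j) c)
          ⬝ᵥ f (uu fun c => ∑ j, Vf 1 j * v (u2 t j) c) := by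
    rw [hUR, hcons, hvR]
    rfl
  rw [hTLL, hTRR, hUL, hUR]
  ring
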